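/- In 𝔽₂₃, let A₁ = {(a,0,0,0,0) : a ∈ ℝ} ∪ {(at, t, −at²/2, a²t³/6, at³/3) : a ∈ ℝ, t > 0}, and let S₁ be the subsemigroup of (ℝ⁵, ∗) generated by A₁. Then: (i) for every t > 0 the point (0, 2t, −t, t/2, t²) (which is exp(t(2X₂ − X₃ + (1/2)X₄)), the exponential of an element of the wedge tangent to the closure of S₁) belongs to the topological closure of S₁; and (ii) for t = 1 the point (0, 2, −1, 1/2, 1) belongs to the topological interior of S₁. In particular, the exponential image of the wedge tangent to closure(S₁) meets the interior of S₁. -/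

import Mathlib

/-- The group operation of the free Carnot group `𝔽₂₃` of rank 2 and step 3, in
exponential coordinates of the second kind on `ℝ⁵`. -/
noncomputable def F23mul (x y : Fin 5 → ℝ) : Fin 5 → ℝ :=
  ![x 0 + y 0,
    x 1 + y 1,
    x 2 + y 2 - x 0 * y 1,
    x 3 + y 3 - x 0 * y 2 + x 0 ^ 2 * y 1 / 2,
    x 4 + y 4 + x 0 * x 1 * y 1 + x 0 * y 1 ^ 2 / 2 - x 1 * y 2]

/-- The smallest subset of `α` containing `A` and closed under `mul`
(the subsemigroup generated by `A`). -/
def genSemigroup {α : Type*} (mul : α → α → α) (A : Set α) : Set α :=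
  ⋂₀ {S : Set α | A ⊆ S ∧ ∀ x ∈ S, ∀ y ∈ S, mul x y ∈ S}

/-- The exponential image of the closed horizontal half-space with inner normal `X₂`. -/
noncomputable def A1 : Set (Fin 5 → ℝ) :=
  {p | ∃ a : ℝ, p = ![a, 0, 0, 0, 0]} ∪
  {p | ∃ a t : ℝ, 0 < t ∧
    p = ![a * t, t, -(a * t ^ 2) / 2, a ^ 2 * t ^ 3 / 6, a * t ^ 3 / 3]}

namespace F23aux

noncomputable def h0 (t : ℝ) : Fin 5 → ℝ := ![0, t, 0, 0, 0]
noncomputable def gg (s : ℝ) : Fin 5 → ℝ := ![s, 0, 0, 0, 0]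

lemma h0_mem {t : ℝ} (ht : 0 < t) : h0 t ∈ A1 := by
  refine Or.inr ⟨0, t, ht, ?_⟩
  funext i; fin_cases i <;> simp [h0]

lemma gg_mem (s : ℝ) : gg s ∈ A1 := Or.inl ⟨s, rfl⟩

lemma mem_gen {x : Fin 5 → ℝ} (hx : x ∈ A1) : x ∈ genSemigroup F23mul A1 :=
  fun _ hT => hT.1 hx

lemma gen_mul {x y : Fin 5 → ℝ} (hx : x ∈ genSemigroup F23mul A1)
    (hy : y ∈ genSemigroup F23mul A1) : F23mul x y ∈ genSemigroup F23mul A1 :=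
  fun T hT => hT.2 x (hx T hT) y (hy T hT)

lemma word_eq (t₁ s t₂ s₂ t₃ : ℝ) :
    F23mul (F23mul (F23mul (F23mul (h0 t₁) (gg s)) (h0 t₂)) (gg s₂)) (h0 t₃)
      = ![s + s₂, t₁ + t₂ + t₃, -(s * t₂) - (s + s₂) * t₃,
          s ^ 2 * t₂ / 2 + (s + s₂) ^ 2 * t₃ / 2,
          s * t₁ * t₂ + s * t₂ ^ 2 / 2 + (s + s₂) * (t₁ + t₂) * t₃
            + (s + s₂) * t₃ ^ 2 / 2] := by
  funext i; fin_cases i <;> simp [F23mul, h0, gg] <;> ring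

lemma word_mem {t₁ t₂ t₃ : ℝ} (s s₂ : ℝ) (h₁ : 0 < t₁) (h₂ : 0 < t₂) (h₃ : 0 < t₃) :
    F23mul (F23mul (F23mul (F23mul (h0 t₁) (gg s)) (h0 t₂)) (gg s₂)) (h0 t₃)
      ∈ genSemigroup F23mul A1 :=
  gen_mul (gen_mul (gen_mul (gen_mul (mem_gen (h0_mem h₁)) (mem_gen (gg_mem s)))
    (mem_gen (h0_mem h₂))) (mem_gen (gg_mem s₂))) (mem_gen (h0_mem h₃))

lemma word6_eq (t₁ s t₂ t₃ c : ℝ) :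
    F23mul (F23mul (F23mul (F23mul (F23mul (h0 t₁) (gg s)) (h0 t₂)) (gg (-s))) (h0 t₃)) (gg c)
      = ![c, t₁ + t₂ + t₃, -(s * t₂), s ^ 2 * t₂ / 2,
          s * t₁ * t₂ + s * t₂ ^ 2 / 2] := by
  rw [word_eq]
  funext i; fin_cases i <;> simp [F23mul, gg] <;> ring

end F23aux

open F23aux


/-- In `𝔽₂₃`, the points `exp(t(2X₂ − X₃ + ½X₄)) = (0, 2t, −t, t/2, t²)` of the wedge
tangent to the closure of the semigroup `S₁` generated by the closed horizontal
half-space lie in the closure of `S₁`, and at `t = 1` the point `(0, 2, −1, 1/2, 1)`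
lies in the interior of `S₁`: the exponential image of the wedge meets the interior
of the semigroup. -/
theorem F23_wedge_meets_interior :
    (∀ t : ℝ, 0 < t →
      (![0, 2 * t, -t, t / 2, t ^ 2] : Fin 5 → ℝ) ∈
        closure (genSemigroup F23mul A1)) ∧
    (![0, 2, -1, 1 / 2, 1] : Fin 5 → ℝ) ∈ interior (genSemigroup F23mul A1) := by
  constructor
  · intro t ht
    apply subset_closure
    have hm := word_mem (t₁ := t/2) (t₂ := t) (t₃ := t/2) 1 (-1)
      (half_pos ht) ht (half_pos ht)
    have he : F23mul (F23mul (F23mul (F23mul (h0 (t/2)) (gg 1)) (h0 t)) (gg (-1))) (h0 (t/2))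
        = ![0, 2 * t, -t, t / 2, t ^ 2] := by
      rw [word_eq]; funext i; fin_cases i <;> norm_num <;> ring
    rwa [he] at hm
  · set U : Set (Fin 5 → ℝ) :=
      {y | y 2 < 0 ∧ 0 < y 3 ∧ 0 < (y 2) ^ 3 + 4 * y 3 * y 4 ∧
        4 * y 1 * y 2 * y 3 - (y 2) ^ 3 + 4 * y 3 * y 4 < 0} with hU
    have hopen : IsOpen U := by
      have h1 : IsOpen {y : Fin 5 → ℝ | y 2 < 0} :=
        isOpen_lt (continuous_apply 2) continuous_const
      have h2 : IsOpen {y : Fin 5 → ℝ | 0 < y 3} :=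
        isOpen_lt continuous_const (continuous_apply 3)
      have h3 : IsOpen {y : Fin 5 → ℝ | 0 < (y 2) ^ 3 + 4 * y 3 * y 4} :=
        isOpen_lt continuous_const (by fun_prop)
      have h4 : IsOpen {y : Fin 5 → ℝ | 4 * y 1 * y 2 * y 3 - (y 2) ^ 3 + 4 * y 3 * y 4 < 0} :=
        isOpen_lt (by fun_prop) continuous_const
      have : U = ({y : Fin 5 → ℝ | y 2 < 0} ∩ {y | 0 < y 3} ∩
          {y | 0 < (y 2) ^ 3 + 4 * y 3 * y 4} ∩
          {y | 4 * y 1 * y 2 * y 3 - (y 2) ^ 3 + 4 * y 3 * y 4 < 0}) := by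
        ext y; simp only [hU, Set.mem_setOf_eq, Set.mem_inter_iff]; tauto
      rw [this]
      exact ((h1.inter h2).inter h3).inter h4
    have hsub : U ⊆ genSemigroup F23mul A1 := by
      rintro y ⟨h2, h3, hP, hQ⟩
      have hy2 : y 2 ≠ 0 := ne_of_lt h2
      have hy3 : y 3 ≠ 0 := ne_of_gt h3
      set s : ℝ := -(2 * y 3) / y 2 with hs
      set t₂ : ℝ := (y 2) ^ 2 / (2 * y 3) with ht₂
      set t₁ : ℝ := ((y 2) ^ 3 + 4 * y 3 * y 4) / (-(4 * y 2 * y 3)) with ht₁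
      set ε : ℝ := y 1 - t₁ - t₂ with hε
      have hden : 0 < -(4 * y 2 * y 3) := by nlinarith
      have h2sq : 0 < (y 2) ^ 2 := by positivity
      have pt₂ : 0 < t₂ := div_pos h2sq (by linarith)
      have pt₁ : 0 < t₁ := div_pos hP hden
      have pε : 0 < ε := by
        have he : ε = (4 * y 1 * y 2 * y 3 - (y 2) ^ 3 + 4 * y 3 * y 4) / (4 * y 2 * y 3) := by
          rw [hε, ht₁, ht₂]; field_simp; ring
        rw [he]
        exact div_pos_of_neg_of_neg hQ (by nlinarith)
      have hm : F23mul (F23mul (F23mul (F23mul (F23mul (h0 t₁) (gg s)) (h0 t₂)) (gg (-s))) (h0 ε)) (gg (y 0))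
          ∈ genSemigroup F23mul A1 :=
        gen_mul (word_mem s (-s) pt₁ pt₂ pε) (mem_gen (gg_mem (y 0)))
      have he : F23mul (F23mul (F23mul (F23mul (F23mul (h0 t₁) (gg s)) (h0 t₂)) (gg (-s))) (h0 ε)) (gg (y 0)) = y := by
        rw [word6_eq]
        funext i
        fin_cases i
        · simp
        · show t₁ + t₂ + ε = y 1
          rw [hε]; ring
        · show -(s * t₂) = y 2
          rw [hs, ht₂]; field_simp
        · show s ^ 2 * t₂ / 2 = y 3
          rw [hs, ht₂]; field_simp
        · show s * t₁ * t₂ + s * t₂ ^ 2 / 2 = y 4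
          rw [hs, ht₁, ht₂]; field_simp; ring
      rwa [he] at hm
    have hpU : (![0, 2, -1, 1 / 2, 1] : Fin 5 → ℝ) ∈ U := by
      refine ⟨by show (-1:ℝ) < 0; norm_num, by show (0:ℝ) < 1 / 2; norm_num, by show (0:ℝ) < (-1) ^ 3 + 4 * (1 / 2) * 1; norm_num, by show 4 * 2 * (-1) * (1 / 2) - (-1:ℝ) ^ 3 + 4 * (1 / 2) * 1 < 0; norm_num⟩
    exact interior_maximal hsub hopen hpU
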